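/- Let B : Fin m → Fin m → ℝ be antisymmetric. Then B is simple (there exist u, v : Fin m → ℝ with B i j = u i * v j − v i * u j) if and only if the full antisymmetrization over all four indices of (i,j,k,l) ↦ B i j * B k l vanishes for all i,j,k,l (the Plucker relation B_{[ij}B_{kl]} = 0). -/

import Mathlib

open Finset

/-- Full antisymmetrization of a 4-index expression over all four index slots. -/
noncomputable def alt4 {m : ℕ} (T : Fin m → Fin m → Fin m → Fin m → ℝ)
    (i j k l : Fin m) : ℝ :=
  (1 / 24 : ℝ) * ∑ σ : Equiv.Perm (Fin 4),
    ((Equiv.Perm.sign σ : ℤ) : ℝ) *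
      T (![i, j, k, l] (σ 0)) (![i, j, k, l] (σ 1)) (![i, j, k, l] (σ 2)) (![i, j, k, l] (σ 3))

lemma sum_perm_succ {n : ℕ} (f : Equiv.Perm (Fin (n+1)) → ℝ) :
    ∑ σ : Equiv.Perm (Fin (n+1)), f σ =
      ∑ a : Fin (n+1), ∑ σ : Equiv.Perm (Fin n), f (Equiv.Perm.decomposeFin.symm (a, σ)) := by
  rw [← Equiv.Perm.decomposeFin.symm.sum_comp, Fintype.sum_prod_type]

lemma alt4_eq {m : ℕ} (B : Fin m → Fin m → ℝ) (hB : ∀ i j, B i j = - B j i)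
    (i j k l : Fin m) :
    alt4 (fun a b c d => B a b * B c d) i j k l =
      (1/3) * (B i j * B k l - B i k * B j l + B i l * B j k) := by
  have e41 : (1 : Fin 4) = Fin.succ 0 := rfl
  have e42 : (2 : Fin 4) = Fin.succ 1 := rfl
  have e43 : (3 : Fin 4) = Fin.succ 2 := rfl
  have e31 : (1 : Fin 3) = Fin.succ 0 := rfl
  have e32 : (2 : Fin 3) = Fin.succ 1 := rfl
  have e21 : (1 : Fin 2) = Fin.succ 0 := rfl
  unfold alt4
  simp only [sum_perm_succ]
  simp only [Fin.sum_univ_succ, Fin.sum_univ_zero, Finset.univ_unique, Finset.sum_singleton,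
    e41, e42, e43, e31, e32, e21,
    Equiv.Perm.decomposeFin.symm_sign, Equiv.Perm.decomposeFin_symm_apply_zero,
    Equiv.Perm.decomposeFin_symm_apply_succ]
  norm_num [Fin.succAbove, Matrix.cons_val_zero, Matrix.cons_val_one, Matrix.cons_val_two, Matrix.cons_val_succ,
    Fin.lt_def, Equiv.Perm.sign_swap', Equiv.swap_apply_def, Fin.ext_iff]
  rw [hB j i, hB k i, hB l i, hB k j, hB l j, hB l k]
  ring

/-- An antisymmetric bivector `B` is simple iff it satisfies the Plucker relation
`B_{[ij}B_{kl]} = 0`. -/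
theorem simple_iff_plucker (m : ℕ) (B : Fin m → Fin m → ℝ)
    (hB : ∀ i j, B i j = - B j i) :
    (∃ u v : Fin m → ℝ, ∀ i j, B i j = u i * v j - v i * u j) ↔
    (∀ i j k l, alt4 (fun i j k l => B i j * B k l) i j k l = 0) := by
  constructor
  · rintro ⟨u, v, huv⟩ i j k l
    rw [alt4_eq B hB]
    simp only [huv]
    ring
  · intro h
    have hP : ∀ i j k l, B i j * B k l - B i k * B j l + B i l * B j k = 0 := by
      intro i j k l
      have := h i j k l
      rw [alt4_eq B hB] at this
      linarith
    by_cases hz : ∀ i j, B i j = 0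
    · exact ⟨0, 0, fun i j => by simp [hz]⟩
    · push_neg at hz
      obtain ⟨a, b, hab⟩ := hz
      refine ⟨fun i => B a i / B a b, fun i => B b i, fun i j => ?_⟩
      have hp := hP a b i j
      field_simp
      nlinarith [hp, hB a i, hB a j, hB b i, hB b j, hB i j]
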